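/- Fix reals d > 0 and 0 < ε ≤ 1 with ε·e^d > (1/d)(e^{dε} − 1), and set c := (e^{dε} − 1 + ε)/(ε·e^d − (1/d)(e^{dε} − 1)). Then for every u with 0 < u ≤ ε: (e^{du} − 1)/u · (c/d + 1) + 1 ≤ c·e^d. -/

import Mathlib

theorem stmt_18 (d ε : ℝ) (hd : 0 < d) (hε0 : 0 < ε) (hε1 : ε ≤ 1)
    (hden : (1 / d) * (Real.exp (d * ε) - 1) < ε * Real.exp d)
    (c : ℝ)
    (hc : c = (Real.exp (d * ε) - 1 + ε) / (ε * Real.exp d - (1 / d) * (Real.exp (d * ε) - 1)))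
    (u : ℝ) (hu0 : 0 < u) (huε : u ≤ ε) :
    (Real.exp (d * u) - 1) / u * (c / d + 1) + 1 ≤ c * Real.exp d := by
  set E := Real.exp (d * ε) with hE
  have hD : 0 < ε * Real.exp d - (1 / d) * (E - 1) := by linarith
  have hE1 : 1 < E := by
    have := Real.add_one_lt_exp (x := d * ε) (by positivity)
    rw [← hE] at this; nlinarith
  have hcpos : 0 < c := by
    rw [hc]; exact div_pos (by linarith) hD
  have hcD : c * (ε * Real.exp d - (1 / d) * (E - 1)) = E - 1 + ε := by
    rw [hc, div_mul_cancel₀ _ (ne_of_gt hD)]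
  have hcD' : c * (ε * Real.exp d * d - (E - 1)) = (E - 1 + ε) * d := by
    field_simp at hcD; linarith [hcD]
  have ha : (0:ℝ) ≤ 1 - u / ε := by
    have : u / ε ≤ 1 := (div_le_one hε0).mpr huε
    linarith
  have hb : (0:ℝ) ≤ u / ε := by positivity
  have hab : (1 - u / ε) + u / ε = 1 := by ring
  have hconv : Real.exp (d * u) ≤ (1 - u / ε) * Real.exp 0 + (u / ε) * Real.exp (d * ε) := by
    have h := convexOn_exp.2 (Set.mem_univ (0 : ℝ)) (Set.mem_univ (d * ε)) ha hb hab
    have harg : (1 - u / ε) • (0 : ℝ) + (u / ε) • (d * ε) = d * u := by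
      field_simp; rw [smul_eq_mul, smul_eq_mul, mul_zero, zero_add, ← mul_assoc, div_mul_cancel₀ u hε0.ne']
    rw [harg] at h
    simpa [smul_eq_mul] using h
  have hmono : (Real.exp (d * u) - 1) / u ≤ (E - 1) / ε := by
    rw [div_le_div_iff₀ hu0 hε0]
    rw [Real.exp_zero] at hconv
    have h2 : ε * Real.exp (d * u) ≤ u * E + ε - u := by
      have h3 := mul_le_mul_of_nonneg_left hconv (le_of_lt hε0)
      calc ε * Real.exp (d * u) ≤ ε * ((1 - u / ε) * 1 + u / ε * E) := h3
        _ = u * E + ε - u := by field_simp; ring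
    nlinarith
  have hfact : 0 ≤ c / d + 1 := by positivity
  have key : (E - 1) / ε * (c / d + 1) + 1 = c * Real.exp d := by
    field_simp
    linear_combination -hcD'
  calc (Real.exp (d * u) - 1) / u * (c / d + 1) + 1
      ≤ (E - 1) / ε * (c / d + 1) + 1 := by nlinarith [hmono, hfact]
    _ = c * Real.exp d := key
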